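/- There is a bijection between the set of strongly separating locality relations ⊤ on the lattice G(ℝ²) of linear subspaces of ℝ² and the set of involutive maps ψ : [0, π) → [0, π) without fixed points; under this bijection ⊤ and ψ correspond if and only if for all θ, θ' ∈ [0, π): span{(cos θ, sin θ)} ⊤ span{(cos θ', sin θ')} ⟺ θ' = ψ(θ). -/

import Mathlib

/-- The line in `ℝ²` spanned by `(cos θ, sin θ)`. -/
noncomputable def line (θ : ℝ) : Submodule ℝ (Fin 2 → ℝ) :=
  Submodule.span ℝ {![Real.cos θ, Real.sin θ]}

/-- A strongly separating locality relation on a bounded lattice. -/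
def IsStronglySepLoc {L : Type*} [Lattice L] [BoundedOrder L] (T : L → L → Prop) : Prop :=
  (∀ a b : L, T a b → T b a) ∧
  (∀ a : L, IsLowerSet {x | T a x}) ∧
  (∀ a b c : L, T a b → T a c → T a (b ⊔ c)) ∧
  (∀ a b : L, T a b → a ⊓ b = ⊥) ∧
  (∀ a : L, ∃ g : L, IsGreatest {x | T a x} g) ∧
  (∀ a : L, IsGreatest {x | ∀ y : L, T a y → T y x} a)

open Real Submodule Module

lemma line_injOn : Set.InjOn line (Set.Ico 0 Real.pi) := by
  rintro θ ⟨hθ0, hθπ⟩ θ' ⟨hθ'0, hθ'π⟩ h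
  have hmem : ![Real.cos θ, Real.sin θ] ∈ line θ' := by
    rw [← h]; exact Submodule.mem_span_singleton_self _
  rw [line, Submodule.mem_span_singleton] at hmem
  obtain ⟨c, hc⟩ := hmem
  have hc0 : c * Real.cos θ' = Real.cos θ := by
    have := congrFun hc 0; simpa using this
  have hc1 : c * Real.sin θ' = Real.sin θ := by
    have := congrFun hc 1; simpa using this
  have hsq : c ^ 2 * (Real.sin θ' ^ 2 + Real.cos θ' ^ 2) = Real.sin θ ^ 2 + Real.cos θ ^ 2 := by
    rw [← hc0, ← hc1]; ring
  rw [Real.sin_sq_add_cos_sq, Real.sin_sq_add_cos_sq, mul_one] at hsq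
  have hs : c = 1 ∨ c = -1 := by
    have h0 : (c - 1) * (c + 1) = 0 := by nlinarith
    rcases mul_eq_zero.mp h0 with h'|h'
    · left; linarith
    · right; linarith
  rcases hs with rfl|rfl
  · rw [one_mul] at hc0
    exact Real.injOn_cos ⟨hθ0, hθπ.le⟩ ⟨hθ'0, hθ'π.le⟩ (hc0.symm)
  · have hsθ : Real.sin θ = 0 := by
      have s1 : 0 ≤ Real.sin θ := Real.sin_nonneg_of_nonneg_of_le_pi hθ0 hθπ.le
      have s2 : 0 ≤ Real.sin θ' := Real.sin_nonneg_of_nonneg_of_le_pi hθ'0 hθ'π.le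
      linarith [hc1]
    have hsθ' : Real.sin θ' = 0 := by
      have s2 : 0 ≤ Real.sin θ' := Real.sin_nonneg_of_nonneg_of_le_pi hθ'0 hθ'π.le
      linarith [hc1, hsθ]
    have hθz : θ = 0 := by
      rw [← Real.sin_eq_zero_iff_of_lt_of_lt (by linarith [Real.pi_pos]) hθπ]
      exact hsθ
    have hθ'z : θ' = 0 := by
      rw [← Real.sin_eq_zero_iff_of_lt_of_lt (by linarith [Real.pi_pos]) hθ'π]
      exact hsθ'
    subst hθz; subst hθ'z
    simp at hc0
    linarith

lemma span_neg_eq (v : Fin 2 → ℝ) : Submodule.span ℝ {-v} = Submodule.span ℝ {v} := by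
  rw [show -v = (-1 : ℝ) • v by simp]
  exact Submodule.span_singleton_smul_eq (by norm_num : IsUnit (-1:ℝ)) v

lemma line_mod (θ : ℝ) : ∃ θ' ∈ Set.Ico (0:ℝ) Real.pi,
    Submodule.span ℝ {![Real.cos θ, Real.sin θ]} = line θ' := by
  have hπ := Real.pi_pos
  set k : ℤ := ⌊θ / Real.pi⌋ with hk
  have h1 : (k:ℝ) * Real.pi ≤ θ := by
    have := Int.floor_le (θ / Real.pi)
    rw [← hk] at this
    calc (k:ℝ) * Real.pi ≤ (θ / Real.pi) * Real.pi := by nlinarith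
    _ = θ := by field_simp
  have h2 : θ < ((k:ℝ) + 1) * Real.pi := by
    have := Int.lt_floor_add_one (θ / Real.pi)
    rw [← hk] at this
    calc θ = (θ / Real.pi) * Real.pi := by field_simp
    _ < ((k:ℝ)+1) * Real.pi := by nlinarith
  refine ⟨θ - k * Real.pi, ⟨by linarith, by linarith⟩, ?_⟩
  have hc : Real.cos θ = (-1)^k * Real.cos (θ - k * Real.pi) := by
    rw [← Real.cos_add_int_mul_pi (θ - k * Real.pi) k, sub_add_cancel]
  have hs : Real.sin θ = (-1)^k * Real.sin (θ - k * Real.pi) := by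
    rw [← Real.sin_add_int_mul_pi (θ - k * Real.pi) k, sub_add_cancel]
  have hv : ![Real.cos θ, Real.sin θ]
      = ((-1:ℝ)^k) • ![Real.cos (θ - k * Real.pi), Real.sin (θ - k * Real.pi)] := by
    funext i; fin_cases i
    · simpa using hc
    · simpa using hs
  rw [hv, line]
  exact Submodule.span_singleton_smul_eq
    ((isUnit_iff_ne_zero).mpr (zpow_ne_zero _ (by norm_num))) _

lemma vec_ne_zero (θ : ℝ) : ![Real.cos θ, Real.sin θ] ≠ 0 := by
  intro h
  have h0 := congrFun h 0
  have h1 := congrFun h 1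
  simp only [Matrix.cons_val_zero, Matrix.cons_val_one, Matrix.head_cons, Pi.zero_apply] at h0 h1
  have h2 := Real.sin_sq_add_cos_sq θ
  rw [h0, h1] at h2; norm_num at h2

lemma line_ne_bot (θ : ℝ) : line θ ≠ ⊥ := by
  intro h
  rw [line, Submodule.span_singleton_eq_bot] at h
  exact vec_ne_zero θ h

lemma finrank_line (θ : ℝ) : Module.finrank ℝ (line θ) = 1 :=
  finrank_span_singleton (vec_ne_zero θ)

lemma finrank_space : Module.finrank ℝ (Fin 2 → ℝ) = 2 := by simp

lemma line_ne_top (θ : ℝ) : line θ ≠ ⊤ := by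
  intro h
  have h2 := finrank_line θ
  rw [h, finrank_top, finrank_space] at h2
  norm_num at h2

lemma span_nonzero_eq_line (v : Fin 2 → ℝ) (hv : v ≠ 0) :
    ∃ θ ∈ Set.Ico (0:ℝ) Real.pi, Submodule.span ℝ {v} = line θ := by
  set z : ℂ := ⟨v 0, v 1⟩ with hz
  have hz0 : z ≠ 0 := by
    intro h
    apply hv
    funext i; fin_cases i
    · exact congrArg Complex.re h
    · exact congrArg Complex.im h
  have hre : ‖z‖ * Real.cos (Complex.arg z) = v 0 := Complex.norm_mul_cos_arg z
  have him : ‖z‖ * Real.sin (Complex.arg z) = v 1 := Complex.norm_mul_sin_arg z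
  have hv' : v = (‖z‖) • ![Real.cos (Complex.arg z), Real.sin (Complex.arg z)] := by
    funext i; fin_cases i
    · simpa using hre.symm
    · simpa using him.symm
  obtain ⟨θ, hθ, hspan⟩ := line_mod (Complex.arg z)
  refine ⟨θ, hθ, ?_⟩
  rw [hv', Submodule.span_singleton_smul_eq
    ((isUnit_iff_ne_zero).mpr (by simpa using hz0)) _, hspan]

lemma eq_line_of_ne (a : Submodule ℝ (Fin 2 → ℝ)) (h0 : a ≠ ⊥) (h1 : a ≠ ⊤) :
    ∃ θ ∈ Set.Ico (0:ℝ) Real.pi, a = line θ := by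
  obtain ⟨v, hv, hv0⟩ := Submodule.exists_mem_ne_zero_of_ne_bot h0
  have hle : Submodule.span ℝ {v} ≤ a := by
    rw [Submodule.span_singleton_le_iff_mem]; exact hv
  have hfr : Module.finrank ℝ a ≤ 1 := by
    by_contra hgt
    push_neg at hgt
    have hle2 : Module.finrank ℝ a ≤ 2 := by
      have := Submodule.finrank_le a
      rwa [finrank_space] at this
    have : Module.finrank ℝ a = 2 := by omega
    exact h1 (Submodule.eq_top_of_finrank_eq (by rw [this, finrank_space]))
  have heq : Submodule.span ℝ {v} = a := by
    apply Submodule.eq_of_le_of_finrank_eq hle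
    have h2 := finrank_span_singleton (K := ℝ) hv0
    have h3 := Submodule.finrank_mono hle
    rw [h2] at h3
    omega
  obtain ⟨θ, hθ, hsp⟩ := span_nonzero_eq_line v hv0
  exact ⟨θ, hθ, by rw [← heq, hsp]⟩

lemma le_line (y : Submodule ℝ (Fin 2 → ℝ)) (θ : ℝ) (h : y ≤ line θ) :
    y = ⊥ ∨ y = line θ := by
  rcases eq_or_ne y ⊥ with h0 | h0
  · exact Or.inl h0
  · right
    apply Submodule.eq_of_le_of_finrank_eq h
    have h1 : 1 ≤ Module.finrank ℝ y := by
      obtain ⟨v, hv, hv0⟩ := Submodule.exists_mem_ne_zero_of_ne_bot h0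
      have : Submodule.span ℝ {v} ≤ y := by
        rw [Submodule.span_singleton_le_iff_mem]; exact hv
      have h2 := Submodule.finrank_mono this
      rw [finrank_span_singleton hv0] at h2
      exact h2
    have h2 : Module.finrank ℝ y ≤ Module.finrank ℝ (line θ) := Submodule.finrank_mono h
    rw [finrank_line] at h2 ⊢
    omega

lemma line_inf (θ θ' : ℝ) (hθ : θ ∈ Set.Ico (0:ℝ) Real.pi) (hθ' : θ' ∈ Set.Ico (0:ℝ) Real.pi)
    (hne : θ ≠ θ') : line θ ⊓ line θ' = ⊥ := by
  rcases le_line _ θ inf_le_left with h | h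
  · exact h
  · exfalso
    have h2 : line θ ≤ line θ' := h ▸ inf_le_right
    rcases le_line _ θ' h2 with h3 | h3
    · exact line_ne_bot θ h3
    · exact hne (line_injOn hθ hθ' h3)

abbrev Ang : Type := Set.Ico (0:ℝ) Real.pi

lemma line_injI (θ θ' : Ang) (h : line θ = line θ') : θ = θ' :=
  Subtype.ext (line_injOn θ.2 θ'.2 h)

def Trel (ψ : Ang → Ang) (a b : Submodule ℝ (Fin 2 → ℝ)) : Prop :=
  a = ⊥ ∨ b = ⊥ ∨ ∃ θ : Ang, a = line θ ∧ b = line (ψ θ)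

lemma trel_line_iff (ψ : Ang → Ang) (θ θ' : Ang) :
    Trel ψ (line θ) (line θ') ↔ θ' = ψ θ := by
  constructor
  · rintro (h | h | ⟨θ₀, h1, h2⟩)
    · exact absurd h (line_ne_bot _)
    · exact absurd h (line_ne_bot _)
    · rw [line_injI _ _ h1]
      exact line_injI _ _ h2
  · rintro rfl
    exact Or.inr (Or.inr ⟨θ, rfl, rfl⟩)

lemma trel_char (ψ : Ang → Ang) (θ : Ang) (x : Submodule ℝ (Fin 2 → ℝ)) :
    Trel ψ (line θ) x ↔ x = ⊥ ∨ x = line (ψ θ) := by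
  constructor
  · rintro (h | h | ⟨θ₀, h1, h2⟩)
    · exact absurd h (line_ne_bot _)
    · exact Or.inl h
    · exact Or.inr (by rw [h2, line_injI _ _ h1])
  · rintro (rfl | rfl)
    · exact Or.inr (Or.inl rfl)
    · exact Or.inr (Or.inr ⟨θ, rfl, rfl⟩)

lemma trel_sep (ψ : Ang → Ang) (hinv : ∀ θ, ψ (ψ θ) = θ) (hfix : ∀ θ, ψ θ ≠ θ) :
    IsStronglySepLoc (Trel ψ) := by
  have hsymm : ∀ a b, Trel ψ a b → Trel ψ b a := by
    rintro a b (h | h | ⟨θ, h1, h2⟩)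
    · exact Or.inr (Or.inl h)
    · exact Or.inl h
    · exact Or.inr (Or.inr ⟨ψ θ, h2, by rw [hinv, h1]⟩)
  refine ⟨hsymm, ?_, ?_, ?_, ?_, ?_⟩
  · -- lower set
    intro a x y hle hx
    rcases hx with h | h | ⟨θ, h1, h2⟩
    · exact Or.inl h
    · exact Or.inr (Or.inl (le_bot_iff.mp (h ▸ hle)))
    · rcases le_line y (ψ θ) (h2 ▸ hle) with h3 | h3
      · exact Or.inr (Or.inl h3)
      · exact Or.inr (Or.inr ⟨θ, h1, h3⟩)
  · -- join
    rintro a b c (h | h | ⟨θ, h1, h2⟩) hc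
    · exact Or.inl h
    · subst h; simpa using hc
    · rcases hc with h | h | ⟨θ', h1', h2'⟩
      · exact Or.inl h
      · exact Or.inr (Or.inr ⟨θ, h1, by rw [h, sup_bot_eq]; exact h2⟩)
      · have : θ' = θ := line_injI _ _ (h1' ▸ h1)
        subst this
        exact Or.inr (Or.inr ⟨θ', h1, by rw [h2, h2', sup_idem]⟩)
  · -- meet bot
    rintro a b (h | h | ⟨θ, h1, h2⟩)
    · rw [h, bot_inf_eq]
    · rw [h, inf_bot_eq]
    · rw [h1, h2]
      exact line_inf _ _ θ.2 (ψ θ).2 (fun he => hfix θ (Subtype.ext he.symm))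
  · -- greatest in polar
    intro a
    rcases eq_or_ne a ⊥ with rfl | h0
    · exact ⟨⊤, Or.inl rfl, fun x _ => le_top⟩
    rcases eq_or_ne a ⊤ with rfl | h1
    · refine ⟨⊥, Or.inr (Or.inl rfl), ?_⟩
      rintro x (h | h | ⟨θ, h2, h3⟩)
      · exact absurd h h0
      · exact h.le
      · exact absurd h2.symm (line_ne_top θ)
    obtain ⟨θ, hθ, rfl⟩ := eq_line_of_ne a h0 h1
    refine ⟨line (ψ ⟨θ, hθ⟩), (trel_char ψ ⟨θ, hθ⟩ _).mpr (Or.inr rfl), ?_⟩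
    intro x hx
    rcases (trel_char ψ ⟨θ, hθ⟩ x).mp hx with rfl | rfl
    · exact bot_le
    · exact le_rfl
  · -- second polar
    intro a
    rcases eq_or_ne a ⊥ with rfl | h0
    · constructor
      · intro y _
        exact Or.inr (Or.inl rfl)
      · intro x hx
        have h := hx ⊤ (Or.inl rfl)
        rcases h with h | h | ⟨θ, h1, h2⟩
        · exact absurd h (by simp)
        · exact h.le
        · exact absurd h1.symm (line_ne_top θ)
    rcases eq_or_ne a ⊤ with rfl | h1
    · constructor
      · rintro y (h | h | ⟨θ, h2, h3⟩)
        · exact absurd h h0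
        · subst h; exact Or.inl rfl
        · exact absurd h2.symm (line_ne_top θ)
      · intro x _
        exact le_top
    obtain ⟨θ, hθ, rfl⟩ := eq_line_of_ne a h0 h1
    set θ₀ : Ang := ⟨θ, hθ⟩
    constructor
    · intro y hy
      rcases (trel_char ψ θ₀ y).mp hy with rfl | rfl
      · exact Or.inl rfl
      · exact Or.inr (Or.inr ⟨ψ θ₀, rfl, by rw [hinv]⟩)
    · intro x hx
      have h := hx (line (ψ θ₀)) ((trel_char ψ θ₀ _).mpr (Or.inr rfl))
      rcases (trel_char ψ (ψ θ₀) x).mp h with rfl | rfl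
      · exact bot_le
      · rw [hinv]

section Extract

variable {T : Submodule ℝ (Fin 2 → ℝ) → Submodule ℝ (Fin 2 → ℝ) → Prop}
  (hT : IsStronglySepLoc T)

include hT

lemma T_bot_right : ∀ a, T a ⊥ := by
  intro a
  obtain ⟨g, hg⟩ := hT.2.2.2.2.1 a
  exact hT.2.1 a bot_le hg.1

lemma T_top_left : ∀ x, T ⊤ x → x = ⊥ := by
  intro x h
  have := hT.2.2.2.1 ⊤ x h
  rwa [top_inf_eq] at this

lemma exists_partner (θ : Ang) :
    ∃ θ' : Ang, T (line θ) (line θ') ∧ ∀ θ'' : Ang, T (line θ) (line θ'') → θ'' = θ' := by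
  obtain ⟨g, hg⟩ := hT.2.2.2.2.1 (line (θ:ℝ))
  have hgtop : g ≠ ⊤ := by
    intro h
    subst h
    exact line_ne_bot θ (T_top_left hT _ (hT.1 _ _ hg.1))
  have hgbot : g ≠ ⊥ := by
    intro h
    subst h
    have hdual := hT.2.2.2.2.2 (line (θ:ℝ))
    have htop : ⊤ ∈ {x | ∀ y, T (line (θ:ℝ)) y → T y x} := by
      intro y hy
      have : y = ⊥ := le_bot_iff.mp (hg.2 hy)
      subst this
      exact hT.1 _ _ (T_bot_right hT ⊤)
    exact line_ne_top (θ:ℝ) (le_antisymm le_top (hdual.2 htop))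
  obtain ⟨θ', hθ', rfl⟩ := eq_line_of_ne g hgbot hgtop
  refine ⟨⟨θ', hθ'⟩, hg.1, ?_⟩
  intro θ'' h''
  rcases le_line _ θ' (hg.2 h'') with h | h
  · exact absurd h (line_ne_bot _)
  · exact line_injI θ'' ⟨θ', hθ'⟩ h

lemma trel_extract : ∃ ψ : Ang → Ang, (∀ θ, ψ (ψ θ) = θ) ∧ (∀ θ, ψ θ ≠ θ) ∧ Trel ψ = T := by
  choose ψ hψ1 hψ2 using exists_partner hT
  have hfix : ∀ θ, ψ θ ≠ θ := by
    intro θ h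
    have h1 := hψ1 θ
    rw [h] at h1
    have := hT.2.2.2.1 _ _ h1
    rw [inf_idem] at this
    exact line_ne_bot _ this
  have hinv : ∀ θ, ψ (ψ θ) = θ := by
    intro θ
    exact (hψ2 (ψ θ) θ (hT.1 _ _ (hψ1 θ))).symm
  refine ⟨ψ, hinv, hfix, ?_⟩
  funext a b
  apply propext
  constructor
  · rintro (rfl | rfl | ⟨θ, rfl, rfl⟩)
    · exact hT.1 _ _ (T_bot_right hT b)
    · exact T_bot_right hT a
    · exact hψ1 θ
  · intro hab
    rcases eq_or_ne a ⊥ with rfl | ha0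
    · exact Or.inl rfl
    rcases eq_or_ne b ⊥ with rfl | hb0
    · exact Or.inr (Or.inl rfl)
    have ha1 : a ≠ ⊤ := fun h => hb0 (T_top_left hT b (h ▸ hab))
    have hb1 : b ≠ ⊤ := fun h => ha0 (T_top_left hT a (h ▸ hT.1 _ _ hab))
    obtain ⟨θ, hθ, rfl⟩ := eq_line_of_ne a ha0 ha1
    obtain ⟨θ', hθ', rfl⟩ := eq_line_of_ne b hb0 hb1
    exact Or.inr (Or.inr ⟨⟨θ, hθ⟩, rfl, by rw [← hψ2 ⟨θ, hθ⟩ ⟨θ', hθ'⟩ hab]⟩)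

end Extract

noncomputable def Gmap : {ψ : Ang → Ang // (∀ θ, ψ (ψ θ) = θ) ∧ (∀ θ, ψ θ ≠ θ)} →
    {T : Submodule ℝ (Fin 2 → ℝ) → Submodule ℝ (Fin 2 → ℝ) → Prop // IsStronglySepLoc T} :=
  fun ψ => ⟨Trel ψ.1, trel_sep ψ.1 ψ.2.1 ψ.2.2⟩

lemma Gmap_bij : Function.Bijective Gmap := by
  constructor
  · intro ψ₁ ψ₂ h
    apply Subtype.ext; funext θ
    have h' : Trel ψ₁.1 = Trel ψ₂.1 := congrArg Subtype.val h
    have h1 : Trel ψ₁.1 (line (θ:ℝ)) (line ((ψ₁.1 θ) : ℝ)) := (trel_line_iff _ θ _).mpr rfl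
    rw [h'] at h1
    exact (trel_line_iff _ θ _).mp h1
  · intro T
    obtain ⟨ψ, hinv, hfix, heq⟩ := trel_extract T.2
    exact ⟨⟨ψ, hinv, hfix⟩, Subtype.ext heq⟩


/-- Strongly separating locality relations on `G(ℝ²)` are in one-one
correspondence with involutive fixed-point-free maps `ψ : [0, π) → [0, π)`, `⊤` and `ψ`
corresponding iff `span{(cos θ, sin θ)} ⊤ span{(cos θ', sin θ')} ↔ θ' = ψ(θ)`. -/
theorem stmt_14 :
    ∃ e : {T : Submodule ℝ (Fin 2 → ℝ) → Submodule ℝ (Fin 2 → ℝ) → Prop //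
            IsStronglySepLoc T} ≃
          {ψ : Set.Ico (0 : ℝ) Real.pi → Set.Ico (0 : ℝ) Real.pi //
            (∀ θ, ψ (ψ θ) = θ) ∧ (∀ θ, ψ θ ≠ θ)},
      ∀ T ψ, e T = ψ ↔
        ∀ θ θ' : Set.Ico (0 : ℝ) Real.pi,
          (T.1 (line (θ : ℝ)) (line (θ' : ℝ)) ↔ θ' = ψ.1 θ) := by
  refine ⟨(Equiv.ofBijective Gmap Gmap_bij).symm, fun T ψ => ?_⟩
  rw [Equiv.symm_apply_eq]
  show T = Gmap ψ ↔ _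
  constructor
  · intro h θ θ'
    have h' : T.1 = Trel ψ.1 := congrArg Subtype.val h
    rw [h']
    exact trel_line_iff ψ.1 θ θ'
  · intro h
    obtain ⟨ψ₀, hinv, hfix, heq⟩ := trel_extract T.2
    have hψ : ∀ θ, ψ₀ θ = ψ.1 θ := by
      intro θ
      exact (h θ (ψ₀ θ)).mp (by rw [← heq]; exact (trel_line_iff _ θ _).mpr rfl)
    apply Subtype.ext
    show T.1 = Trel ψ.1
    rw [← heq, show ψ₀ = ψ.1 from funext hψ]
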